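/- Suppose Z is chosen uniformly at random among all binary vectors in {0,1}ⁿ with exactly n₁ ones, Yᵢ = yᵢ(dᵢ(Zᵢ)) and Dᵢ = dᵢ(Zᵢ) with dᵢ(1) ≥ dᵢ(0), and the set of compliers C = {i : dᵢ(0)=0, dᵢ(1)=1} is nonempty. If β̄ = (1/|C|)·Σ_{i∈C}(yᵢ(1) − yᵢ(0)) is the local average treatment effect, then the expectation of τ̂(β̄) = (1/n)·Σᵢ (Yᵢ − β̄Dᵢ)(Zᵢ − n₁/n) is zero. -/

import Mathlib

open Finset

lemma count_mem (n n₁ : ℕ) (hn₁ : 1 ≤ n₁) (i : Fin n) :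
    ((Finset.powersetCard n₁ (Finset.univ : Finset (Fin n))).filter (fun s => i ∈ s)).card
      = (n - 1).choose (n₁ - 1) := by
  obtain ⟨m, rfl⟩ := Nat.exists_eq_add_of_le hn₁
  have hi : i ∉ (Finset.univ : Finset (Fin n)).erase i := notMem_erase i _
  have huniv : (Finset.univ : Finset (Fin n)) = insert i ((Finset.univ : Finset (Fin n)).erase i) :=
    (insert_erase (mem_univ i)).symm
  rw [show 1 + m = m + 1 by ring, huniv, powersetCard_succ_insert hi, filter_union]
  have h1 : (Finset.powersetCard (m+1) ((Finset.univ : Finset (Fin n)).erase i)).filter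
      (fun s => i ∈ s) = ∅ := by
    refine filter_eq_empty_iff.2 fun s hs his => ?_
    exact hi ((mem_powersetCard.1 hs).1 his)
  have h2 : ((Finset.powersetCard m ((Finset.univ : Finset (Fin n)).erase i)).image
      (insert i)).filter (fun s => i ∈ s)
      = (Finset.powersetCard m ((Finset.univ : Finset (Fin n)).erase i)).image (insert i) := by
    refine filter_eq_self.2 fun s hs => ?_
    obtain ⟨t, _, rfl⟩ := mem_image.1 hs
    exact mem_insert_self i t
  rw [h1, h2, empty_union, card_image_of_injOn, card_powersetCard, card_erase_of_mem (mem_univ i),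
    card_univ, Fintype.card_fin]
  · congr 1
  · intro s hs t ht hst
    have hsi : i ∉ s := fun h => hi ((mem_powersetCard.1 hs).1 h)
    have hti : i ∉ t := fun h => hi ((mem_powersetCard.1 ht).1 h)
    have := congrArg (fun u => erase u i) hst
    simpa [erase_insert hsi, erase_insert hti] using this

lemma count_not_mem (n n₁ : ℕ) (i : Fin n) :
    ((Finset.powersetCard n₁ (Finset.univ : Finset (Fin n))).filter (fun s => i ∉ s)).card
      = (n - 1).choose n₁ := by
  have : (Finset.powersetCard n₁ (Finset.univ : Finset (Fin n))).filter (fun s => i ∉ s)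
      = Finset.powersetCard n₁ ((Finset.univ : Finset (Fin n)).erase i) := by
    ext s
    simp only [mem_filter, mem_powersetCard, subset_erase, subset_univ, true_and, and_comm]
  rw [this, card_powersetCard, card_erase_of_mem (mem_univ i), card_univ, Fintype.card_fin]

theorem stmt1 (n n₁ : ℕ) (hn₁ : 1 ≤ n₁) (hn : n₁ ≤ n - 1) (hnpos : 0 < n)
    (y0 y1 : Fin n → ℝ) (d0 d1 : Fin n → ℕ)
    (hd0 : ∀ i, d0 i ≤ 1) (hd1 : ∀ i, d1 i ≤ 1) (hmono : ∀ i, d0 i ≤ d1 i)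
    (C : Finset (Fin n)) (hC : C = Finset.univ.filter (fun i => d0 i = 0 ∧ d1 i = 1))
    (hCne : C.Nonempty)
    (β : ℝ) (hβ : β = (1 / (C.card : ℝ)) * ∑ i ∈ C, (y1 i - y0 i)) :
    (1 / (n.choose n₁) : ℝ) *
      ∑ s ∈ Finset.powersetCard n₁ (Finset.univ : Finset (Fin n)),
        ((1 / (n : ℝ)) * ∑ i,
          (((if i ∈ s then (if d1 i = 1 then y1 i else y0 i)
              else (if d0 i = 1 then y1 i else y0 i))
            - β * (if i ∈ s then (d1 i : ℝ) else (d0 i : ℝ)))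
          * ((if i ∈ s then (1 : ℝ) else 0) - (n₁ : ℝ) / n))) = 0 := by
  have hn0 : (n : ℝ) ≠ 0 := Nat.cast_ne_zero.2 hnpos.ne'
  have hn₁n : n₁ ≤ n := le_trans hn (Nat.sub_le n 1)
  set a : Fin n → ℝ := fun i => (if d1 i = 1 then y1 i else y0 i) - β * (d1 i) with ha
  set b : Fin n → ℝ := fun i => (if d0 i = 1 then y1 i else y0 i) - β * (d0 i) with hb
  set N1 : ℕ := (n - 1).choose (n₁ - 1) with hN1
  set N0 : ℕ := (n - 1).choose n₁ with hN0
  have hch : (N0 : ℝ) * n₁ = (N1 : ℝ) * ((n : ℝ) - n₁) := by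
    have h := Nat.choose_succ_right_eq (n - 1) (n₁ - 1)
    have h1 : n₁ - 1 + 1 = n₁ := by omega
    have h2 : n - 1 - (n₁ - 1) = n - n₁ := by omega
    rw [h1, h2] at h
    have h' : (((n - 1).choose n₁ * n₁ : ℕ) : ℝ) = (((n - 1).choose (n₁ - 1) * (n - n₁) : ℕ) : ℝ) := by
      exact_mod_cast congrArg (Nat.cast (R := ℝ)) h
    push_cast [Nat.cast_sub hn₁n] at h'
    linarith [h']
  suffices h : ∑ s ∈ Finset.powersetCard n₁ (Finset.univ : Finset (Fin n)),
      (∑ i, (((if i ∈ s then (if d1 i = 1 then y1 i else y0 i)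
              else (if d0 i = 1 then y1 i else y0 i))
            - β * (if i ∈ s then (d1 i : ℝ) else (d0 i : ℝ)))
          * ((if i ∈ s then (1 : ℝ) else 0) - (n₁ : ℝ) / n))) = 0 by
    rw [← Finset.mul_sum, h, mul_zero, mul_zero]
  rw [Finset.sum_comm]
  have key : ∀ i : Fin n,
      ∑ s ∈ Finset.powersetCard n₁ (Finset.univ : Finset (Fin n)),
        (((if i ∈ s then (if d1 i = 1 then y1 i else y0 i)
              else (if d0 i = 1 then y1 i else y0 i))
            - β * (if i ∈ s then (d1 i : ℝ) else (d0 i : ℝ)))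
          * ((if i ∈ s then (1 : ℝ) else 0) - (n₁ : ℝ) / n))
      = ((N1 : ℝ) * ((n : ℝ) - n₁) / n) * (a i - b i) := by
    intro i
    have step : ∀ s ∈ Finset.powersetCard n₁ (Finset.univ : Finset (Fin n)),
        (((if i ∈ s then (if d1 i = 1 then y1 i else y0 i)
              else (if d0 i = 1 then y1 i else y0 i))
            - β * (if i ∈ s then (d1 i : ℝ) else (d0 i : ℝ)))
          * ((if i ∈ s then (1 : ℝ) else 0) - (n₁ : ℝ) / n))
        = (if i ∈ s then a i * (1 - (n₁ : ℝ)/n) else b i * (0 - (n₁ : ℝ)/n)) := by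
      intro s _
      by_cases hmem : i ∈ s <;> simp [hmem, ha, hb]
    rw [Finset.sum_congr rfl step, Finset.sum_ite, Finset.sum_const, Finset.sum_const,
      count_mem n n₁ hn₁ i, count_not_mem n n₁ i, ← hN1, ← hN0, nsmul_eq_mul, nsmul_eq_mul]
    have e1 : (1:ℝ) - (n₁:ℝ)/n = ((n:ℝ)-n₁)/n := by field_simp
    have e2 : (0:ℝ) - (n₁:ℝ)/n = -((n₁:ℝ)/n) := by ring
    have e3 : (N0:ℝ) * ((n₁:ℝ)/n) = (N1:ℝ) * (((n:ℝ)-n₁)/n) := by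
      rw [mul_div_assoc', mul_div_assoc', hch]
    rw [e1, e2]
    linear_combination (-(b i)) * e3
  rw [Finset.sum_congr rfl (fun i _ => key i), ← Finset.mul_sum]
  have hab : ∀ i : Fin n, a i - b i = if d0 i = 0 ∧ d1 i = 1 then (y1 i - y0 i - β) else 0 := by
    intro i
    have h0 := hd0 i; have h1 := hd1 i; have hm := hmono i
    interval_cases h : d0 i <;> interval_cases h' : d1 i <;>
      simp_all [ha, hb] <;> ring
  rw [Finset.sum_congr rfl (fun i _ => hab i), ← Finset.sum_filter, ← hC]
  have hcard : (C.card : ℝ) ≠ 0 := Nat.cast_ne_zero.2 hCne.card_pos.ne'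
  have : ∑ i ∈ C, (y1 i - y0 i - β) = 0 := by
    rw [Finset.sum_sub_distrib, Finset.sum_const, nsmul_eq_mul, hβ]
    field_simp
    ring
  rw [this, mul_zero]
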